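/- Let n ≥ 1 and m ≥ 1, and let 𝒟_g denote the family of first-order operators consisting of ∂̸_i = ∂_i + (x^i/r)∂_t (i=1,…,n) and ((t−r)/r)∂_α (α=0,…,n), where r = |x|. There exists a constant C = C(n,m) > 0 such that for every D ∈ 𝒟_g, every finite sequence I of indices in {1,…,n} with |I| = m, every smooth function u defined on an open subset of ℝ^{1+n}, and every point (t,x) of the domain satisfying t/2 ≤ r ≤ t − 1: |H^I D u| ≤ |D H^I u| + C Σ_{Y ∈ 𝒟_g} Σ_{|J| < m} |Y H^J u|, where the inner sum runs over all finite sequences J of indices in {1,…,n} of length strictly less than m. -/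

import Mathlib

open MeasureTheory

noncomputable section

variable {n : ℕ}

/-- The partial derivative `∂_α` on `ℝ^{1+n}`; index `0` is the time variable `t`. -/
def pd (α : Fin (n + 1)) (u : (Fin (n + 1) → ℝ) → ℝ) : (Fin (n + 1) → ℝ) → ℝ :=
  fun p => fderiv ℝ u p (Pi.single α 1)

/-- The Euclidean length `r = |x|` of the spatial part of a point of `ℝ^{1+n}`. -/
def rad (p : Fin (n + 1) → ℝ) : ℝ := Real.sqrt (∑ i : Fin n, p i.succ ^ 2)

/-- The Lorentz boost `H_j = t ∂_j + x^j ∂_t`. -/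
def Lb (j : Fin n) (u : (Fin (n + 1) → ℝ) → ℝ) : (Fin (n + 1) → ℝ) → ℝ :=
  fun p => p 0 * pd j.succ u p + p j.succ * pd 0 u p

/-- The iterated boost `H^I = H_{i₁} ∘ ⋯ ∘ H_{i_m}` for a finite sequence `I`. -/
def HI : List (Fin n) → ((Fin (n + 1) → ℝ) → ℝ) → ((Fin (n + 1) → ℝ) → ℝ)
  | [], u => u
  | j :: I, u => Lb j (HI I u)

/-- The point `(√(T²+|x|²), x)` of the hyperboloid `H_T` over `x ∈ ℝⁿ`. -/
def hyp (T : ℝ) (x : Fin n → ℝ) : Fin (n + 1) → ℝ :=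
  Fin.cons (Real.sqrt (T ^ 2 + ∑ i, x i ^ 2)) x
/-- The family `𝒟_g` of "good" first-order operators: the light-cone-tangential
derivatives `∂̸_i = ∂_i + (x^i/r)∂_t` (indexed by `Sum.inl i`) and the operators
`((t-r)/r)∂_α` (indexed by `Sum.inr α`). -/
def Dg (d : Fin n ⊕ Fin (n + 1)) (u : (Fin (n + 1) → ℝ) → ℝ) :
    (Fin (n + 1) → ℝ) → ℝ :=
  fun p =>
    match d with
    | Sum.inl i => pd i.succ u p + (p i.succ / rad p) * pd 0 u p
    | Sum.inr α => ((p 0 - rad p) / rad p) * pd α u p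

section Aux
variable {n : ℕ}

local notation "Pt" => (Fin (n+1) → ℝ)

def Om : Set (Fin (n+1) → ℝ) := {p | 0 < rad p}
def Reg : Set (Fin (n+1) → ℝ) := {p | p 0 / 2 ≤ rad p ∧ rad p ≤ p 0 - 1}

def qf (p : Fin (n+1) → ℝ) : ℝ := ∑ i : Fin n, p i.succ ^ 2

lemma qf_nonneg (p : Pt) : 0 ≤ qf p := Finset.sum_nonneg fun i _ => sq_nonneg _

lemma rad_sq {p : Pt} : rad p ^ 2 = qf p := Real.sq_sqrt (qf_nonneg p)

lemma continuous_rad : Continuous (rad (n := n)) :=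
  Real.continuous_sqrt.comp (by continuity)

lemma isOpen_Om : IsOpen (Om (n := n)) := isOpen_lt continuous_const continuous_rad

lemma rad_nonneg (p : Pt) : 0 ≤ rad p := Real.sqrt_nonneg _

lemma abs_le_rad (p : Pt) (i : Fin n) : |p i.succ| ≤ rad p := by
  rw [← Real.sqrt_sq_eq_abs]
  exact Real.sqrt_le_sqrt (Finset.single_le_sum (f := fun i => p i.succ ^ 2)
    (fun i _ => sq_nonneg _) (Finset.mem_univ i))

lemma Reg_rad {p : Pt} (hp : p ∈ Reg) : 1 ≤ rad p := by
  obtain ⟨h1, h2⟩ := hp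
  nlinarith

lemma Reg_subset_Om : (Reg (n := n)) ⊆ Om := fun p hp => lt_of_lt_of_le one_pos (Reg_rad hp)

lemma Reg_t {p : Pt} (hp : p ∈ Reg) : 0 ≤ p 0 ∧ p 0 ≤ 2 * rad p := by
  obtain ⟨h1, h2⟩ := hp
  constructor <;> nlinarith [rad_nonneg p]

def sfun (i : Fin n) : (Fin (n+1) → ℝ) → ℝ := fun p => p i.succ / rad p
def tfun : (Fin (n+1) → ℝ) → ℝ := fun p => p 0 / rad p

lemma abs_sfun_le {p : Pt} (hp : p ∈ Reg) (i : Fin n) : |sfun i p| ≤ 1 := by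
  have h1 := Reg_rad hp
  have := abs_le_rad p i
  rw [sfun, abs_div, abs_of_nonneg (by linarith : (0:ℝ) ≤ rad p)]
  rw [div_le_one (by linarith)]
  linarith

lemma abs_tfun_le {p : Pt} (hp : p ∈ Reg) : |tfun p| ≤ 2 := by
  have h1 := Reg_rad hp
  obtain ⟨h2, h3⟩ := Reg_t hp
  rw [tfun, abs_div, abs_of_nonneg h2, abs_of_nonneg (by linarith : (0:ℝ) ≤ rad p)]
  rw [div_le_iff₀ (by linarith)]
  linarith

/-- Admissible coefficient functions: polynomials in `x^i/r` and `t/r`. -/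
inductive Adm : ((Fin (n+1) → ℝ) → ℝ) → Prop
  | const (c : ℝ) : Adm (fun _ => c)
  | s (i : Fin n) : Adm (sfun i)
  | t : Adm tfun
  | add {a b} : Adm a → Adm b → Adm (fun p => a p + b p)
  | mul {a b} : Adm a → Adm b → Adm (fun p => a p * b p)

lemma Adm.bound {b} (hb : Adm (n := n) b) : ∃ B : ℝ, 0 ≤ B ∧ ∀ p ∈ Reg, |b p| ≤ B := by
  induction hb with
  | const c => exact ⟨|c|, abs_nonneg c, fun p _ => le_rfl⟩
  | s i => exact ⟨1, zero_le_one, fun p hp => abs_sfun_le hp i⟩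
  | t => exact ⟨2, by norm_num, fun p hp => abs_tfun_le hp⟩
  | add ha hb iha ihb =>
    obtain ⟨A, hA0, hA⟩ := iha; obtain ⟨B, hB0, hB⟩ := ihb
    exact ⟨A + B, by linarith, fun p hp => (abs_add_le _ _).trans (add_le_add (hA p hp) (hB p hp))⟩
  | mul ha hb iha ihb =>
    obtain ⟨A, hA0, hA⟩ := iha; obtain ⟨B, hB0, hB⟩ := ihb
    refine ⟨A * B, mul_nonneg hA0 hB0, fun p hp => ?_⟩
    rw [abs_mul]
    exact mul_le_mul (hA p hp) (hB p hp) (abs_nonneg _) hA0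

end Aux
section Aux2
variable {n : ℕ}
local notation "Pt" => (Fin (n+1) → ℝ)

def projL (α : Fin (n+1)) : (Fin (n+1) → ℝ) →L[ℝ] ℝ := ContinuousLinearMap.proj α

def radD (p : Fin (n+1) → ℝ) : (Fin (n+1) → ℝ) →L[ℝ] ℝ :=
  ∑ i : Fin n, ((rad p)⁻¹ * p i.succ) • projL i.succ

lemma rad_ne {p : Pt} (hp : p ∈ Om) : rad p ≠ 0 := ne_of_gt hp

lemma qf_ne {p : Pt} (hp : p ∈ Om) : qf p ≠ 0 := by
  intro h
  have : rad p = 0 := by rw [show rad p = Real.sqrt (qf p) from rfl, h, Real.sqrt_zero]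
  exact rad_ne hp this

lemma hasFDerivAt_rad {p : Pt} (hp : p ∈ Om) : HasFDerivAt rad (radD p) p := by
  have hq : HasFDerivAt qf (∑ i : Fin n, ((2:ℝ) * p i.succ) • projL i.succ) p := by
    apply HasFDerivAt.fun_sum
    intro i _
    have h1 : HasFDerivAt (fun q : Pt => q i.succ) (projL i.succ) p :=
      (projL i.succ).hasFDerivAt
    have h2 := h1.fun_mul h1
    have h3 : ((2:ℝ) * p i.succ) • projL (n := n) i.succ
        = p i.succ • projL i.succ + p i.succ • projL i.succ := by
      rw [two_mul, add_smul]
    rw [h3]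
    simpa only [pow_two] using h2
  have hs := (Real.hasDerivAt_sqrt (qf_ne hp)).comp_hasFDerivAt p hq
  have heq : radD p = (1/(2*Real.sqrt (qf p))) • ∑ i : Fin n, ((2:ℝ) * p i.succ) • projL i.succ := by
    rw [Finset.smul_sum]
    unfold radD
    apply Finset.sum_congr rfl
    intro i _
    rw [smul_smul]
    congr 1
    have hr : rad p ≠ 0 := rad_ne hp
    have hrr : Real.sqrt (qf p) = rad p := rfl
    rw [hrr]
    field_simp
  rw [heq]
  exact hs

lemma radD_single_zero {p : Pt} : radD p (Pi.single 0 1) = 0 := by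
  simp [radD, projL, ContinuousLinearMap.sum_apply,
    Pi.single_eq_of_ne (Fin.succ_ne_zero _)]

lemma radD_single_succ {p : Pt} (k : Fin n) :
    radD p (Pi.single k.succ 1) = (rad p)⁻¹ * p k.succ := by
  simp only [radD, ContinuousLinearMap.sum_apply, ContinuousLinearMap.smul_apply, projL,
    ContinuousLinearMap.proj_apply, Pi.single_apply, Fin.succ_inj, smul_eq_mul, mul_ite, mul_one,
    mul_zero]
  rw [Finset.sum_ite_eq' Finset.univ k]
  simp

lemma hasFDerivAt_irad {p : Pt} (hp : p ∈ Om) :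
    HasFDerivAt (fun q => (rad q)⁻¹) ((-((rad p)^2)⁻¹) • radD p) p :=
  (hasDerivAt_inv (rad_ne hp)).comp_hasFDerivAt p (hasFDerivAt_rad hp)

lemma hasFDerivAt_sfun (i : Fin n) {p : Pt} (hp : p ∈ Om) :
    HasFDerivAt (sfun i)
      (p i.succ • ((-((rad p)^2)⁻¹) • radD p) + (rad p)⁻¹ • projL i.succ) p := by
  have hproj : HasFDerivAt (fun q : Pt => q i.succ) (projL i.succ) p :=
    (projL i.succ).hasFDerivAt
  have h := hproj.mul (hasFDerivAt_irad hp)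
  have : sfun (n := n) i = fun q => q i.succ * (rad q)⁻¹ := by
    funext q; rw [sfun, div_eq_mul_inv]
  rw [this]
  exact h

lemma hasFDerivAt_tfun {p : Pt} (hp : p ∈ Om) :
    HasFDerivAt tfun
      (p 0 • ((-((rad p)^2)⁻¹) • radD p) + (rad p)⁻¹ • projL 0) p := by
  have hproj : HasFDerivAt (fun q : Pt => q 0) (projL 0) p := (projL 0).hasFDerivAt
  have h := hproj.mul (hasFDerivAt_irad hp)
  have : tfun (n := n) = fun q => q 0 * (rad q)⁻¹ := by
    funext q; rw [tfun, div_eq_mul_inv]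
  rw [this]
  exact h

lemma diff_sfun (i : Fin n) {p : Pt} (hp : p ∈ Om) : DifferentiableAt ℝ (sfun i) p :=
  (hasFDerivAt_sfun i hp).differentiableAt

lemma diff_tfun {p : Pt} (hp : p ∈ Om) : DifferentiableAt ℝ tfun p :=
  (hasFDerivAt_tfun hp).differentiableAt

lemma Adm.diff {b} (hb : Adm (n := n) b) {p : Pt} (hp : p ∈ Om) : DifferentiableAt ℝ b p := by
  induction hb with
  | const c => exact differentiableAt_const c
  | s i => exact diff_sfun i hp
  | t => exact diff_tfun hp
  | add ha hb iha ihb => exact iha.add ihb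
  | mul ha hb iha ihb => exact iha.mul ihb

lemma lb_sfun (j i : Fin n) {p : Pt} (hp : p ∈ Om) :
    Lb j (sfun i) p = tfun p * ((if i = j then (1:ℝ) else 0) - sfun i p * sfun j p) := by
  have hr := rad_ne hp
  unfold Lb pd
  rw [(hasFDerivAt_sfun i hp).fderiv]
  simp only [ContinuousLinearMap.add_apply, ContinuousLinearMap.smul_apply,
    radD_single_zero, radD_single_succ, projL, ContinuousLinearMap.proj_apply,
    smul_eq_mul, Pi.single_apply, Fin.succ_inj]
  rw [if_neg (Fin.succ_ne_zero i)]
  unfold sfun tfun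
  by_cases h : i = j
  · subst h; simp only [if_pos rfl]
    field_simp
    ring
  · rw [if_neg h]
    field_simp
    ring

lemma lb_tfun (j : Fin n) {p : Pt} (hp : p ∈ Om) :
    Lb j tfun p = sfun j p * (1 - tfun p * tfun p) := by
  have hr := rad_ne hp
  unfold Lb pd
  rw [(hasFDerivAt_tfun hp).fderiv]
  simp only [ContinuousLinearMap.add_apply, ContinuousLinearMap.smul_apply,
    radD_single_zero, radD_single_succ, projL, ContinuousLinearMap.proj_apply,
    smul_eq_mul]
  have h1 : (Pi.single (0 : Fin (n+1)) (1:ℝ) : Pt) 0 = 1 := by simp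
  have h2 : (Pi.single j.succ (1:ℝ) : Pt) 0 = 0 := by
    simp [(Fin.succ_ne_zero j).symm, Pi.single_eq_of_ne]
  rw [h1, h2]
  unfold sfun tfun
  field_simp
  ring

lemma lb_const (j : Fin n) (c : ℝ) (p : Pt) : Lb j (fun _ => c) p = 0 := by
  unfold Lb pd
  simp [fderiv_const]

lemma lb_congr {j : Fin n} {f g : Pt → ℝ} {p : Pt} (h : f =ᶠ[nhds p] g) :
    Lb j f p = Lb j g p := by
  unfold Lb pd
  rw [h.fderiv_eq]

lemma lb_add {j : Fin n} {f g : Pt → ℝ} {p : Pt} (hf : DifferentiableAt ℝ f p)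
    (hg : DifferentiableAt ℝ g p) :
    Lb j (fun q => f q + g q) p = Lb j f p + Lb j g p := by
  unfold Lb pd
  rw [fderiv_fun_add hf hg]
  simp only [ContinuousLinearMap.add_apply]
  ring

lemma lb_mul {j : Fin n} {f g : Pt → ℝ} {p : Pt} (hf : DifferentiableAt ℝ f p)
    (hg : DifferentiableAt ℝ g p) :
    Lb j (fun q => f q * g q) p = Lb j f p * g p + f p * Lb j g p := by
  unfold Lb pd
  rw [fderiv_fun_mul hf hg]
  simp only [ContinuousLinearMap.add_apply, ContinuousLinearMap.smul_apply, smul_eq_mul]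
  ring

lemma Adm.sub {a b} (ha : Adm (n := n) a) (hb : Adm b) : Adm (fun p => a p - b p) := by
  have := ha.add ((Adm.const (-1)).mul hb)
  simpa only [neg_one_mul, ← sub_eq_add_neg] using this

lemma Adm.lb {b} (hb : Adm (n := n) b) (j : Fin n) :
    ∃ b', Adm b' ∧ ∀ p ∈ Om, Lb j b p = b' p := by
  induction hb with
  | const c => exact ⟨fun _ => 0, Adm.const 0, fun p _ => lb_const j c p⟩
  | s i =>
    by_cases h : i = j
    · refine ⟨fun p => tfun p * (1 - sfun i p * sfun j p),
        Adm.t.mul ((Adm.const 1).sub ((Adm.s i).mul (Adm.s j))), fun p hp => ?_⟩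
      rw [lb_sfun j i hp, if_pos h]
    · refine ⟨fun p => tfun p * (0 - sfun i p * sfun j p),
        Adm.t.mul ((Adm.const 0).sub ((Adm.s i).mul (Adm.s j))), fun p hp => ?_⟩
      rw [lb_sfun j i hp, if_neg h]
  | t =>
    exact ⟨fun p => sfun j p * (1 - tfun p * tfun p),
      (Adm.s j).mul ((Adm.const 1).sub (Adm.t.mul Adm.t)), fun p hp => lb_tfun j hp⟩
  | add ha hb iha ihb =>
    obtain ⟨a', ha', hEa⟩ := iha
    obtain ⟨b', hb', hEb⟩ := ihb
    refine ⟨fun p => a' p + b' p, ha'.add hb', fun p hp => ?_⟩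
    rw [lb_add (ha.diff hp) (hb.diff hp), hEa p hp, hEb p hp]
  | @mul a b ha hb iha ihb =>
    obtain ⟨a', ha', hEa⟩ := iha
    obtain ⟨b', hb', hEb⟩ := ihb
    refine ⟨fun p => a' p * b p + a p * b' p,
      (ha'.mul hb).add (ha.mul hb'), fun p hp => ?_⟩
    rw [lb_mul (ha.diff hp) (hb.diff hp), hEa p hp, hEb p hp]

end Aux2
section Aux3
variable {n : ℕ}
local notation "Pt" => (Fin (n+1) → ℝ)

lemma contDiffOn_pd {U : Set Pt} (hU : IsOpen U) {u : Pt → ℝ}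
    (hu : ContDiffOn ℝ (⊤ : ℕ∞) u U) (α : Fin (n+1)) :
    ContDiffOn ℝ (⊤ : ℕ∞) (pd α u) U := by
  have h1 : ContDiffOn ℝ (⊤ : ℕ∞) (fderiv ℝ u) U := hu.fderiv_of_isOpen hU (by norm_cast)
  have h2 := (ContinuousLinearMap.apply ℝ ℝ (Pi.single α (1:ℝ) : Pt)).contDiff
    (𝕜 := ℝ) (n := (⊤ : ℕ∞))
  exact h2.comp_contDiffOn h1

lemma contDiffOn_coord (β : Fin (n+1)) {U : Set Pt} :
    ContDiffOn ℝ (⊤ : ℕ∞) (fun q : Pt => q β) U :=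
  ((ContinuousLinearMap.proj (R := ℝ) (φ := fun _ : Fin (n+1) => ℝ) β).contDiff).contDiffOn

lemma contDiffOn_Lb {U : Set Pt} (hU : IsOpen U) {u : Pt → ℝ}
    (hu : ContDiffOn ℝ (⊤ : ℕ∞) u U) (j : Fin n) :
    ContDiffOn ℝ (⊤ : ℕ∞) (Lb j u) U := by
  exact ((contDiffOn_coord 0).mul (contDiffOn_pd hU hu j.succ)).add
    ((contDiffOn_coord j.succ).mul (contDiffOn_pd hU hu 0))

lemma contDiffOn_HI {U : Set Pt} (hU : IsOpen U) {u : Pt → ℝ}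
    (hu : ContDiffOn ℝ (⊤ : ℕ∞) u U) (I : List (Fin n)) :
    ContDiffOn ℝ (⊤ : ℕ∞) (HI I u) U := by
  induction I with
  | nil => exact hu
  | cons j I ih => exact contDiffOn_Lb hU ih j

lemma diff_pd {U : Set Pt} (hU : IsOpen U) {u : Pt → ℝ}
    (hu : ContDiffOn ℝ (⊤ : ℕ∞) u U) (α : Fin (n+1)) {p : Pt} (hp : p ∈ U) :
    DifferentiableAt ℝ (pd α u) p :=
  ((contDiffOn_pd hU hu α).contDiffAt (hU.mem_nhds hp)).differentiableAt (by norm_cast)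

lemma diff_fderiv {U : Set Pt} (hU : IsOpen U) {u : Pt → ℝ}
    (hu : ContDiffOn ℝ (⊤ : ℕ∞) u U) {p : Pt} (hp : p ∈ U) :
    DifferentiableAt ℝ (fderiv ℝ u) p := by
  have h1 : ContDiffOn ℝ (⊤ : ℕ∞) (fderiv ℝ u) U := hu.fderiv_of_isOpen hU (by norm_cast)
  exact (h1.contDiffAt (hU.mem_nhds hp)).differentiableAt (by norm_cast)

/-- Commutator of a boost with a coordinate derivative. -/
lemma pd_lb {U : Set Pt} (hU : IsOpen U) {u : Pt → ℝ}
    (hu : ContDiffOn ℝ (⊤ : ℕ∞) u U) {p : Pt} (hp : p ∈ U) (j : Fin n) (α : Fin (n+1)) :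
    pd α (Lb j u) p = Lb j (pd α u) p
      + (Pi.single α (1:ℝ) : Pt) 0 * pd j.succ u p
      + (Pi.single α (1:ℝ) : Pt) j.succ * pd 0 u p := by
  have hsymm : IsSymmSndFDerivAt ℝ u p := by
    apply (hu.contDiffAt (hU.mem_nhds hp)).isSymmSndFDerivAt
    rw [minSmoothness_of_isRCLikeNormedField]
    norm_cast
  have hfd := diff_fderiv hU hu hp
  have key : ∀ β γ : Fin (n+1),
      fderiv ℝ (pd β u) p (Pi.single γ (1:ℝ)) = fderiv ℝ (pd γ u) p (Pi.single β (1:ℝ)) := by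
    intro β γ
    have hrep : ∀ β γ : Fin (n+1), fderiv ℝ (pd β u) p (Pi.single γ (1:ℝ))
        = fderiv ℝ (fderiv ℝ u) p (Pi.single γ (1:ℝ)) (Pi.single β (1:ℝ)) := by
      intro β γ
      have : pd β u = fun q => (fderiv ℝ u q) ((fun _ : Pt => (Pi.single β (1:ℝ) : Pt)) q) := rfl
      rw [this, fderiv_clm_apply hfd (differentiableAt_const _)]
      simp
    rw [hrep β γ, hrep γ β, hsymm]
  have hdj : DifferentiableAt ℝ (pd j.succ u) p := diff_pd hU hu j.succ hp
  have hd0 : DifferentiableAt ℝ (pd 0 u) p := diff_pd hU hu 0 hp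
  have hc0 : DifferentiableAt ℝ (fun q : Pt => q 0) p :=
    (ContinuousLinearMap.proj (R := ℝ) (φ := fun _ : Fin (n+1) => ℝ) 0).differentiableAt
  have hcj : DifferentiableAt ℝ (fun q : Pt => q j.succ) p :=
    (ContinuousLinearMap.proj (R := ℝ) (φ := fun _ : Fin (n+1) => ℝ) j.succ).differentiableAt
  have hLb : pd α (Lb j u) p
      = fderiv ℝ (fun q => q 0 * pd j.succ u q + q j.succ * pd 0 u q) p (Pi.single α 1) := rfl
  rw [hLb, fderiv_fun_add (hc0.fun_mul hdj) (hcj.fun_mul hd0), fderiv_fun_mul hc0 hdj, fderiv_fun_mul hcj hd0]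
  have hf0 : fderiv ℝ (fun q : Pt => q 0) p
      = ContinuousLinearMap.proj (R := ℝ) (φ := fun _ : Fin (n+1) => ℝ) 0 :=
    (ContinuousLinearMap.proj (R := ℝ) (φ := fun _ : Fin (n+1) => ℝ) 0).fderiv
  have hfj : fderiv ℝ (fun q : Pt => q j.succ) p
      = ContinuousLinearMap.proj (R := ℝ) (φ := fun _ : Fin (n+1) => ℝ) j.succ :=
    (ContinuousLinearMap.proj (R := ℝ) (φ := fun _ : Fin (n+1) => ℝ) j.succ).fderiv
  rw [hf0, hfj]
  simp only [ContinuousLinearMap.add_apply, ContinuousLinearMap.smul_apply, smul_eq_mul,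
    ContinuousLinearMap.proj_apply]
  rw [key j.succ α, key 0 α]
  have hLb2 : Lb j (pd α u) p
      = p 0 * fderiv ℝ (pd α u) p (Pi.single j.succ 1)
        + p j.succ * fderiv ℝ (pd α u) p (Pi.single 0 1) := rfl
  rw [hLb2]
  ring

end Aux3
section Aux4
variable {n : ℕ}
local notation "Pt" => (Fin (n+1) → ℝ)

def gfun : (Fin (n+1) → ℝ) → ℝ := fun p => tfun p - 1

lemma Adm.neg {a} (ha : Adm (n := n) a) : Adm (fun p => -(a p)) := by
  have := (Adm.const 0).sub ha
  simpa only [zero_sub] using this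

lemma gAdm : Adm (n := n) gfun := Adm.t.sub (Adm.const 1)

lemma dg_inr_eq (α : Fin (n+1)) (w : Pt → ℝ) {p : Pt} (hp : p ∈ Om) :
    Dg (Sum.inr α) w p = gfun p * pd α w p := by
  have hr := rad_ne hp
  show (p 0 - rad p) / rad p * pd α w p = (p 0 / rad p - 1) * pd α w p
  rw [sub_div, div_self hr]

lemma dg_inr_eventuallyEq (α : Fin (n+1)) (w : Pt → ℝ) {p : Pt} (hp : p ∈ Om) :
    Dg (Sum.inr α) w =ᶠ[nhds p] fun q => gfun q * pd α w q :=
  Filter.eventuallyEq_of_mem (isOpen_Om.mem_nhds hp) (fun q hq => dg_inr_eq α w hq)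

lemma dg_inl_eq (i : Fin n) (w : Pt → ℝ) :
    Dg (Sum.inl i) w = fun q => pd i.succ w q + sfun i q * pd 0 w q := rfl

lemma diff_Dg {U : Set Pt} (hU : IsOpen U) {w : Pt → ℝ}
    (hw : ContDiffOn ℝ (⊤ : ℕ∞) w U) (Y : Fin n ⊕ Fin (n+1)) {p : Pt}
    (hp : p ∈ U) (hpo : p ∈ Om) : DifferentiableAt ℝ (Dg Y w) p := by
  cases Y with
  | inl i =>
    rw [dg_inl_eq]
    exact (diff_pd hU hw i.succ hp).add ((diff_sfun i hpo).mul (diff_pd hU hw 0 hp))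
  | inr α =>
    rw [(dg_inr_eventuallyEq α w hpo).differentiableAt_iff]
    exact (gAdm.diff hpo).mul (diff_pd hU hw α hp)

lemma lb_gfun (j : Fin n) {p : Pt} (hp : p ∈ Om) :
    Lb j gfun p = sfun j p * (1 - tfun p * tfun p) := by
  have h : Lb j (fun q => tfun q + (fun _ : Pt => (-1:ℝ)) q) p
      = Lb j tfun p + Lb j (fun _ : Pt => (-1:ℝ)) p :=
    lb_add (diff_tfun hp) (differentiableAt_const _)
  have hg : gfun = fun q => tfun q + (fun _ : Pt => (-1:ℝ)) q := by
    funext q; simp [gfun, sub_eq_add_neg]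
  rw [hg, h, lb_const, lb_tfun j hp, add_zero]

/-- Commutator of a boost with a good derivative `∂̸_i`. -/
lemma lb_dg_inl {U : Set Pt} (hU : IsOpen U) {u : Pt → ℝ}
    (hu : ContDiffOn ℝ (⊤ : ℕ∞) u U) {p : Pt} (hp : p ∈ U) (hpo : p ∈ Om)
    (j i : Fin n) :
    Lb j (Dg (Sum.inl i) u) p = Dg (Sum.inl i) (Lb j u) p
      + (-(sfun i p)) * Dg (Sum.inl j) u p
      + ((if i = j then (1:ℝ) else 0) - sfun i p * sfun j p) * Dg (Sum.inr 0) u p := by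
  have d1 : DifferentiableAt ℝ (pd i.succ u) p := diff_pd hU hu i.succ hp
  have d0 : DifferentiableAt ℝ (pd 0 u) p := diff_pd hU hu 0 hp
  have dsf : DifferentiableAt ℝ (sfun i) p := diff_sfun i hpo
  have hL : Lb j (Dg (Sum.inl i) u) p
      = Lb j (pd i.succ u) p + (Lb j (sfun i) p * pd 0 u p + sfun i p * Lb j (pd 0 u) p) := by
    rw [dg_inl_eq, lb_add d1 (dsf.fun_mul d0), lb_mul dsf d0]
  -- commutators of Lb with pd
  have hpd1 := pd_lb hU hu hp j i.succ
  have hpd0 := pd_lb hU hu hp j 0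
  have e1 : (Pi.single i.succ (1:ℝ) : Pt) 0 = 0 := by simp [Fin.succ_ne_zero]
  have e2 : (Pi.single i.succ (1:ℝ) : Pt) j.succ = if i = j then 1 else 0 := by
    simp [Pi.single_apply, Fin.succ_inj, eq_comm]
  have e3 : (Pi.single (0 : Fin (n+1)) (1:ℝ) : Pt) 0 = 1 := by simp
  have e4 : (Pi.single (0 : Fin (n+1)) (1:ℝ) : Pt) j.succ = 0 := by
    simp [(Fin.succ_ne_zero j).symm]
  rw [e1, e2] at hpd1
  rw [e3, e4] at hpd0
  have hdg1 : Dg (Sum.inl i) (Lb j u) p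
      = pd i.succ (Lb j u) p + sfun i p * pd 0 (Lb j u) p := rfl
  have hdg2 : Dg (Sum.inl j) u p = pd j.succ u p + sfun j p * pd 0 u p := rfl
  have hdg3 : Dg (Sum.inr 0) u p = (tfun p - 1) * pd 0 u p := dg_inr_eq 0 u hpo
  rw [hL, lb_sfun j i hpo, hdg1, hdg2, hdg3]
  by_cases h : i = j
  · subst h
    rw [if_pos rfl] at hpd1 ⊢
    -- express Lb j (pd _ u) from hpd
    have h1 : Lb i (pd i.succ u) p = pd i.succ (Lb i u) p - pd 0 u p := by
      rw [hpd1]; ring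
    have h0 : Lb i (pd 0 u) p = pd 0 (Lb i u) p - pd i.succ u p := by
      rw [hpd0]; ring
    rw [h1, h0]; ring
  · rw [if_neg h] at hpd1 ⊢
    have h1 : Lb j (pd i.succ u) p = pd i.succ (Lb j u) p := by rw [hpd1]; ring
    have h0 : Lb j (pd 0 u) p = pd 0 (Lb j u) p - pd j.succ u p := by rw [hpd0]; ring
    rw [h1, h0]; ring

/-- Commutator of a boost with a good derivative `((t-r)/r)∂_α`. -/
lemma lb_dg_inr {U : Set Pt} (hU : IsOpen U) {u : Pt → ℝ}
    (hu : ContDiffOn ℝ (⊤ : ℕ∞) u U) {p : Pt} (hp : p ∈ U) (hpo : p ∈ Om)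
    (j : Fin n) (α : Fin (n+1)) :
    Lb j (Dg (Sum.inr α) u) p = Dg (Sum.inr α) (Lb j u) p
      + (-(sfun j p * (1 + tfun p))) * Dg (Sum.inr α) u p
      + (-((Pi.single α (1:ℝ) : Pt) 0)) * Dg (Sum.inr j.succ) u p
      + (-((Pi.single α (1:ℝ) : Pt) j.succ)) * Dg (Sum.inr 0) u p := by
  have dα : DifferentiableAt ℝ (pd α u) p := diff_pd hU hu α hp
  have dg : DifferentiableAt ℝ gfun p := gAdm.diff hpo
  have hL : Lb j (Dg (Sum.inr α) u) p
      = Lb j gfun p * pd α u p + gfun p * Lb j (pd α u) p := by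
    rw [lb_congr (dg_inr_eventuallyEq α u hpo), lb_mul dg dα]
  have hpdα := pd_lb hU hu hp j α
  have hLpd : Lb j (pd α u) p = pd α (Lb j u) p
      - (Pi.single α (1:ℝ) : Pt) 0 * pd j.succ u p
      - (Pi.single α (1:ℝ) : Pt) j.succ * pd 0 u p := by rw [hpdα]; ring
  rw [hL, hLpd, lb_gfun j hpo,
    dg_inr_eq α (Lb j u) hpo, dg_inr_eq α u hpo, dg_inr_eq j.succ u hpo,
    dg_inr_eq (0 : Fin (n+1)) u hpo]
  unfold gfun
  ring

/-- Uniform base commutator: `[H_j, D]u = Σ c_Y · (Y u)` with admissible coefficients. -/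
lemma comm_base (j : Fin n) (d : Fin n ⊕ Fin (n+1)) :
    ∃ B : List ((Pt → ℝ) × (Fin n ⊕ Fin (n+1))), (∀ t ∈ B, Adm t.1) ∧
      ∀ U : Set Pt, IsOpen U → ∀ w : Pt → ℝ, ContDiffOn ℝ (⊤ : ℕ∞) w U →
        ∀ p ∈ U, p ∈ Om →
        Lb j (Dg d w) p = Dg d (Lb j w) p + (B.map (fun t => t.1 p * Dg t.2 w p)).sum := by
  cases d with
  | inl i =>
    refine ⟨[(fun p => -(sfun i p), Sum.inl j),
             (fun p => (if i = j then (1:ℝ) else 0) - sfun i p * sfun j p, Sum.inr 0)],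
      ?_, ?_⟩
    · intro t ht
      simp only [List.mem_cons, List.mem_singleton, List.not_mem_nil, or_false] at ht
      rcases ht with h | h <;> subst h
      · exact (Adm.s i).neg
      · by_cases h : i = j
        · simp only [if_pos h]
          exact (Adm.const 1).sub ((Adm.s i).mul (Adm.s j))
        · simp only [if_neg h]
          exact (Adm.const 0).sub ((Adm.s i).mul (Adm.s j))
    · intro U hU w hw p hp hpo
      rw [lb_dg_inl hU hw hp hpo j i]
      simp only [List.map_cons, List.map_nil, List.sum_cons, List.sum_nil, add_zero]
      ring
  | inr α =>
    refine ⟨[(fun p => -(sfun j p * (1 + tfun p)), Sum.inr α),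
             (fun _ => -((Pi.single α (1:ℝ) : Pt) 0), Sum.inr j.succ),
             (fun _ => -((Pi.single α (1:ℝ) : Pt) j.succ), Sum.inr 0)], ?_, ?_⟩
    · intro t ht
      simp only [List.mem_cons, List.not_mem_nil, or_false] at ht
      rcases ht with h | h | h <;> subst h
      · exact ((Adm.s j).mul ((Adm.const 1).add Adm.t)).neg
      · exact Adm.const _
      · exact Adm.const _
    · intro U hU w hw p hp hpo
      rw [lb_dg_inr hU hw hp hpo j α]
      simp only [List.map_cons, List.map_nil, List.sum_cons, List.sum_nil, add_zero]
      ring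

end Aux4
section Aux5
variable {n : ℕ}
local notation "Pt" => (Fin (n+1) → ℝ)

/-- A term in the commutator expansion: a coefficient, a good operator, a boost multi-index. -/
abbrev CTerm (n : ℕ) := ((Fin (n+1) → ℝ) → ℝ) × ((Fin n ⊕ Fin (n+1)) × List (Fin n))

def teval (u : Pt → ℝ) (t : CTerm n) (p : Pt) : ℝ := t.1 p * Dg t.2.1 (HI t.2.2 u) p

lemma diff_listSum {ι : Type*} {L : List ι} {F : ι → Pt → ℝ} {p : Pt}
    (h : ∀ t ∈ L, DifferentiableAt ℝ (F t) p) :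
    DifferentiableAt ℝ (fun q => (L.map (fun t => F t q)).sum) p := by
  induction L with
  | nil => exact differentiableAt_const 0
  | cons a L ih =>
    simp only [List.map_cons, List.sum_cons]
    exact (h a (List.mem_cons_self)).add (ih fun t ht => h t (List.mem_cons_of_mem a ht))

lemma diff_term {U : Set Pt} (hU : IsOpen U) {u : Pt → ℝ}
    (hu : ContDiffOn ℝ (⊤ : ℕ∞) u U) {p : Pt} (hp : p ∈ U) (hpo : p ∈ Om)
    {t : CTerm n} (ht : Adm t.1) :
    DifferentiableAt ℝ (fun q => teval u t q) p :=
  (ht.diff hpo).mul (diff_Dg hU (contDiffOn_HI hU hu t.2.2) t.2.1 hp hpo)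

lemma expand_step (j : Fin n) (m : ℕ) (L : List (CTerm n))
    (hL : ∀ t ∈ L, Adm t.1 ∧ t.2.2.length < m) :
    ∃ L' : List (CTerm n), (∀ t ∈ L', Adm t.1 ∧ t.2.2.length < m + 1) ∧
      ∀ U : Set Pt, IsOpen U → ∀ u : Pt → ℝ, ContDiffOn ℝ (⊤ : ℕ∞) u U →
        ∀ p ∈ U, p ∈ Om →
        Lb j (fun q => (L.map (fun t => teval u t q)).sum) p
          = (L'.map (fun t => teval u t p)).sum := by
  induction L with
  | nil =>
    refine ⟨[], by simp, fun U hU u hu p hp hpo => ?_⟩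
    show Lb j (fun _ => (0:ℝ)) p = 0
    exact lb_const j 0 p
  | cons t L ih =>
    obtain ⟨hAdm_t, hlen_t⟩ := hL t (List.mem_cons_self)
    obtain ⟨L₂, hL₂, hEq₂⟩ := ih fun s hs => hL s (List.mem_cons_of_mem t hs)
    obtain ⟨c', hc', hEc⟩ := hAdm_t.lb j
    obtain ⟨B, hB, hBeq⟩ := comm_base j t.2.1
    refine ⟨(c', t.2.1, t.2.2) :: (t.1, t.2.1, j :: t.2.2)
        :: (B.map (fun s => ((fun p => t.1 p * s.1 p), s.2, t.2.2)) ++ L₂), ?_, ?_⟩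
    · intro s hs
      simp only [List.mem_cons, List.mem_append, List.mem_map] at hs
      rcases hs with h | h | ⟨b, hb, h⟩ | h
      · subst h; exact ⟨hc', Nat.lt_succ_of_lt hlen_t⟩
      · subst h; exact ⟨hAdm_t, by simpa using Nat.succ_lt_succ hlen_t⟩
      · subst h
        exact ⟨hAdm_t.mul (hB b hb), Nat.lt_succ_of_lt hlen_t⟩
      · exact ⟨(hL₂ s h).1, (hL₂ s h).2⟩
    · intro U hU u hu p hp hpo
      have hdt : DifferentiableAt ℝ (fun q => teval u t q) p := diff_term hU hu hp hpo hAdm_t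
      have hds : DifferentiableAt ℝ (fun q => (L.map (fun s => teval u s q)).sum) p :=
        diff_listSum fun s hs => diff_term hU hu hp hpo (hL s (List.mem_cons_of_mem t hs)).1
      have h1 : Lb j (fun q => ((t :: L).map (fun s => teval u s q)).sum) p
          = Lb j (fun q => teval u t q) p
            + Lb j (fun q => (L.map (fun s => teval u s q)).sum) p := by
        have := lb_add (j := j) hdt hds
        simpa only [List.map_cons, List.sum_cons] using this
      have h2 : Lb j (fun q => teval u t q) p
          = Lb j t.1 p * Dg t.2.1 (HI t.2.2 u) p
            + t.1 p * Lb j (Dg t.2.1 (HI t.2.2 u)) p := by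
        exact lb_mul (hAdm_t.diff hpo)
          (diff_Dg hU (contDiffOn_HI hU hu t.2.2) t.2.1 hp hpo)
      have h3 : Lb j (Dg t.2.1 (HI t.2.2 u)) p
          = Dg t.2.1 (HI (j :: t.2.2) u) p
            + (B.map (fun s => s.1 p * Dg s.2 (HI t.2.2 u) p)).sum :=
        hBeq U hU (HI t.2.2 u) (contDiffOn_HI hU hu t.2.2) p hp hpo
      rw [h1, h2, h3, hEq₂ U hU u hu p hp hpo, hEc p hpo]
      simp only [List.map_cons, List.sum_cons, List.map_append, List.sum_append, List.map_map,
        Function.comp_def, teval, mul_assoc]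
      rw [mul_add, ← List.sum_map_mul_left]
      ring

/-- Main expansion: `H^I D u = D H^I u + Σ c · Y H^J u` with `|J| < |I|`. -/
lemma expand (I : List (Fin n)) (d : Fin n ⊕ Fin (n+1)) :
    ∃ L : List (CTerm n), (∀ t ∈ L, Adm t.1 ∧ t.2.2.length < I.length) ∧
      ∀ U : Set Pt, IsOpen U → ∀ u : Pt → ℝ, ContDiffOn ℝ (⊤ : ℕ∞) u U →
        ∀ p ∈ U, p ∈ Om →
        HI I (Dg d u) p = Dg d (HI I u) p + (L.map (fun t => teval u t p)).sum := by
  induction I with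
  | nil => exact ⟨[], by simp, fun U hU u hu p hp hpo => by simp [HI]⟩
  | cons j I ih =>
    obtain ⟨L, hL, hEq⟩ := ih
    obtain ⟨B, hB, hBeq⟩ := comm_base j d
    obtain ⟨L', hL', hEq'⟩ := expand_step j I.length L hL
    refine ⟨(B.map (fun s => (s.1, s.2, I))) ++ L', ?_, ?_⟩
    · intro s hs
      simp only [List.mem_append, List.mem_map] at hs
      rcases hs with ⟨b, hb, h⟩ | h
      · subst h
        exact ⟨hB b hb, by simpa using Nat.lt_succ_self I.length⟩
      · exact ⟨(hL' s h).1, by simpa using (hL' s h).2⟩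
    · intro U hU u hu p hp hpo
      have hfe : HI I (Dg d u) =ᶠ[nhds p]
          (fun q => Dg d (HI I u) q + (L.map (fun t => teval u t q)).sum) := by
        apply Filter.eventuallyEq_of_mem ((hU.inter isOpen_Om).mem_nhds ⟨hp, hpo⟩)
        intro q hq
        exact hEq U hU u hu q hq.1 hq.2
      have hstep : HI (j :: I) (Dg d u) p
          = Lb j (fun q => Dg d (HI I u) q + (L.map (fun t => teval u t q)).sum) p :=
        lb_congr hfe
      have hd1 : DifferentiableAt ℝ (Dg d (HI I u)) p :=
        diff_Dg hU (contDiffOn_HI hU hu I) d hp hpo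
      have hd2 : DifferentiableAt ℝ (fun q => (L.map (fun t => teval u t q)).sum) p :=
        diff_listSum fun s hs => diff_term hU hu hp hpo (hL s hs).1
      rw [hstep, lb_add hd1 hd2,
        hBeq U hU (HI I u) (contDiffOn_HI hU hu I) p hp hpo,
        hEq' U hU u hu p hp hpo]
      rw [show Lb j (HI I u) = HI (j :: I) u from rfl]
      simp only [List.map_append, List.sum_append, List.map_map, Function.comp_def, teval]
      ring

end Aux5
section Aux6
variable {n : ℕ}
local notation "Pt" => (Fin (n+1) → ℝ)

def bigS (m : ℕ) (u : Pt → ℝ) (p : Pt) : ℝ :=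
  ∑ Y : Fin n ⊕ Fin (n+1), ∑ k ∈ Finset.range m, ∑ J : Fin k → Fin n,
    |Dg Y (HI (List.ofFn J) u) p|

lemma bigS_nonneg (m : ℕ) (u : Pt → ℝ) (p : Pt) : 0 ≤ bigS (n := n) m u p := by
  unfold bigS
  positivity

lemma le_bigS {m : ℕ} (u : Pt → ℝ) (p : Pt) (Y : Fin n ⊕ Fin (n+1)) (J : List (Fin n))
    (hJ : J.length < m) : |Dg Y (HI J u) p| ≤ bigS m u p := by
  have h1 : |Dg Y (HI J u) p| ≤ ∑ J' : Fin J.length → Fin n, |Dg Y (HI (List.ofFn J') u) p| := by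
    have := Finset.single_le_sum
      (f := fun J' : Fin J.length → Fin n => |Dg Y (HI (List.ofFn J') u) p|)
      (fun _ _ => abs_nonneg _) (Finset.mem_univ J.get)
    simpa [List.ofFn_get] using this
  have h2 : (∑ J' : Fin J.length → Fin n, |Dg Y (HI (List.ofFn J') u) p|)
      ≤ ∑ k ∈ Finset.range m, ∑ J' : Fin k → Fin n, |Dg Y (HI (List.ofFn J') u) p| :=
    Finset.single_le_sum
      (f := fun k => ∑ J' : Fin k → Fin n, |Dg Y (HI (List.ofFn J') u) p|)
      (fun k _ => Finset.sum_nonneg fun _ _ => abs_nonneg _) (Finset.mem_range.mpr hJ)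
  have h3 : (∑ k ∈ Finset.range m, ∑ J' : Fin k → Fin n, |Dg Y (HI (List.ofFn J') u) p|)
      ≤ bigS m u p :=
    Finset.single_le_sum
      (f := fun Y' => ∑ k ∈ Finset.range m, ∑ J' : Fin k → Fin n,
        |Dg Y' (HI (List.ofFn J') u) p|)
      (fun Y' _ => Finset.sum_nonneg fun _ _ => Finset.sum_nonneg fun _ _ => abs_nonneg _)
      (Finset.mem_univ Y)
  linarith

lemma list_bound (m : ℕ) (L : List (CTerm n)) (hL : ∀ t ∈ L, Adm t.1 ∧ t.2.2.length < m) :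
    ∃ C ≥ (0:ℝ), ∀ (u : Pt → ℝ) (p : Pt), p ∈ Reg →
      |(L.map (fun t => teval u t p)).sum| ≤ C * bigS m u p := by
  induction L with
  | nil => exact ⟨0, le_rfl, fun u p _ => by simp⟩
  | cons t L ih =>
    obtain ⟨C, hC0, hC⟩ := ih fun s hs => hL s (List.mem_cons_of_mem t hs)
    obtain ⟨hAdm, hlen⟩ := hL t (List.mem_cons_self)
    obtain ⟨B, hB0, hBb⟩ := hAdm.bound
    refine ⟨B + C, by linarith, fun u p hpR => ?_⟩
    simp only [List.map_cons, List.sum_cons]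
    have h1 : |teval u t p + (L.map (fun s => teval u s p)).sum|
        ≤ |teval u t p| + |(L.map (fun s => teval u s p)).sum| := abs_add_le _ _
    have h2 : |teval u t p| ≤ B * bigS m u p := by
      rw [teval, abs_mul]
      exact mul_le_mul (hBb p hpR) (le_bigS u p t.2.1 t.2.2 hlen) (abs_nonneg _) hB0
    have h3 := hC u p hpR
    have := bigS_nonneg (n := n) m u p
    nlinarith

lemma per_pair (m : ℕ) (d : Fin n ⊕ Fin (n+1)) (I : Fin m → Fin n) :
    ∃ C ≥ (0:ℝ), ∀ U : Set Pt, IsOpen U → ∀ u : Pt → ℝ, ContDiffOn ℝ (⊤ : ℕ∞) u U →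
      ∀ p ∈ U, p ∈ Reg →
      |HI (List.ofFn I) (Dg d u) p|
        ≤ |Dg d (HI (List.ofFn I) u) p| + C * bigS m u p := by
  obtain ⟨L, hL, hEq⟩ := expand (List.ofFn I) d
  rw [List.length_ofFn] at hL
  obtain ⟨C, hC0, hCb⟩ := list_bound m L hL
  refine ⟨C, hC0, fun U hU u hu p hp hpR => ?_⟩
  have hpo : p ∈ Om := Reg_subset_Om hpR
  rw [hEq U hU u hu p hp hpo]
  calc |Dg d (HI (List.ofFn I) u) p + (L.map (fun t => teval u t p)).sum|
      ≤ |Dg d (HI (List.ofFn I) u) p| + |(L.map (fun t => teval u t p)).sum| := abs_add_le _ _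
    _ ≤ |Dg d (HI (List.ofFn I) u) p| + C * bigS m u p := by
        have := hCb u p hpR; linarith

end Aux6

/-- commutator estimate between iterated boosts and the operators
of `𝒟_g`, valid in the region `t/2 ≤ r ≤ t - 1`:
`|H^I D u| ≤ |D H^I u| + C Σ_{Y ∈ 𝒟_g} Σ_{|J| < m} |Y H^J u|`. -/
theorem boost_good_derivative_commutator_estimate (n m : ℕ) (hn : 1 ≤ n) (hm : 1 ≤ m) :
    ∃ C > (0 : ℝ), ∀ d : Fin n ⊕ Fin (n + 1), ∀ I : Fin m → Fin n,
      ∀ U : Set (Fin (n + 1) → ℝ), IsOpen U →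
      ∀ u : (Fin (n + 1) → ℝ) → ℝ, ContDiffOn ℝ (⊤ : ℕ∞) u U →
      ∀ p ∈ U, p 0 / 2 ≤ rad p → rad p ≤ p 0 - 1 →
        |HI (List.ofFn I) (Dg d u) p|
          ≤ |Dg d (HI (List.ofFn I) u) p|
            + C * ∑ Y : Fin n ⊕ Fin (n + 1), ∑ k ∈ Finset.range m,
                ∑ J : Fin k → Fin n, |Dg Y (HI (List.ofFn J) u) p| := by
  have H : ∀ pr : (Fin n ⊕ Fin (n+1)) × (Fin m → Fin n),
      ∃ C ≥ (0:ℝ), ∀ U : Set (Fin (n+1) → ℝ), IsOpen U →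
        ∀ u : (Fin (n+1) → ℝ) → ℝ, ContDiffOn ℝ (⊤ : ℕ∞) u U →
        ∀ p ∈ U, p ∈ Reg →
        |HI (List.ofFn pr.2) (Dg pr.1 u) p|
          ≤ |Dg pr.1 (HI (List.ofFn pr.2) u) p| + C * bigS m u p :=
    fun pr => per_pair m pr.1 pr.2
  choose f hf0 hf using H
  refine ⟨1 + ∑ pr : (Fin n ⊕ Fin (n+1)) × (Fin m → Fin n), f pr, ?_, ?_⟩
  · have : (0:ℝ) ≤ ∑ pr : (Fin n ⊕ Fin (n+1)) × (Fin m → Fin n), f pr :=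
      Finset.sum_nonneg fun pr _ => hf0 pr
    linarith
  · intro d I U hU u hu p hp h1 h2
    have hpR : p ∈ Reg := ⟨h1, h2⟩
    have hkey := hf (d, I) U hU u hu p hp hpR
    have hle : f (d, I) ≤ 1 + ∑ pr : (Fin n ⊕ Fin (n+1)) × (Fin m → Fin n), f pr := by
      have := Finset.single_le_sum (f := f) (fun pr _ => hf0 pr) (Finset.mem_univ (d, I))
      linarith
    have hS := bigS_nonneg (n := n) m u p
    have : |HI (List.ofFn I) (Dg d u) p|
        ≤ |Dg d (HI (List.ofFn I) u) p|
          + (1 + ∑ pr : (Fin n ⊕ Fin (n+1)) × (Fin m → Fin n), f pr) * bigS m u p := by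
      nlinarith
    exact this
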